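/- The 27 triangular lattice points of a (2,3)-equiangular hexagon form an 11-distance set: the set of squared pairwise distances between distinct points is exactly {1, 3, 4, 7, 9, 12, 13, 16, 19, 21, 25}. -/

import Mathlib

/-- Triangular lattice point a•(1,0) + b•(1/2, √3/2). -/
noncomputable def tri (a b : ℤ) : ℝ × ℝ :=
  ((a : ℝ) + (b : ℝ) / 2, (b : ℝ) * Real.sqrt 3 / 2)

/-- Squared Euclidean distance in the plane. -/
def sqd (p q : ℝ × ℝ) : ℝ := (p.1 - q.1) ^ 2 + (p.2 - q.2) ^ 2

/-- The triangular lattice. -/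
noncomputable def triLattice : Set (ℝ × ℝ) := {p | ∃ a b : ℤ, p = tri a b}

/-- Closed regular hexagon of side `k` centered at the origin with a vertex at `(k,0)`. -/
noncomputable def hexR (k : ℤ) : Set (ℝ × ℝ) :=
  convexHull ℝ ({tri k 0, tri 0 k, tri (-k) k, tri (-k) 0, tri 0 (-k), tri k (-k)} : Set (ℝ × ℝ))

/-- Closed (k, k+1)-equiangular hexagon with vertices at lattice points. -/
noncomputable def hexE (k : ℤ) : Set (ℝ × ℝ) :=
  convexHull ℝ ({tri k 0, tri k (k+1), tri 0 (2*k+1), tri (-(k+1)) (2*k+1),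
    tri (-(k+1)) (k+1), tri 0 0} : Set (ℝ × ℝ))

/-- Set of squared distances between distinct points of `X`. -/
def sqdSet (X : Set (ℝ × ℝ)) : Set ℝ := {d | ∃ p ∈ X, ∃ q ∈ X, p ≠ q ∧ d = sqd p q}

/-! ### Auxiliary material -/

/-- The linear map sending lattice coordinates to the plane. -/
noncomputable def Lm : (ℝ × ℝ) →ₗ[ℝ] (ℝ × ℝ) where
  toFun p := (p.1 + p.2 / 2, p.2 * Real.sqrt 3 / 2)
  map_add' p q := by ext <;> simp <;> ring
  map_smul' c p := by ext <;> simp <;> ring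

lemma tri_eq_Lm (a b : ℤ) : tri a b = Lm ((a : ℝ), (b : ℝ)) := rfl

lemma Lm_inj : Function.Injective Lm := by
  intro p q h
  have hs : Real.sqrt 3 ≠ 0 := by positivity
  have h2 : p.2 * Real.sqrt 3 / 2 = q.2 * Real.sqrt 3 / 2 := congrArg Prod.snd h
  have hb : p.2 = q.2 := by
    have h2' : p.2 * Real.sqrt 3 = q.2 * Real.sqrt 3 := by linarith
    exact mul_right_cancel₀ hs h2'
  have h1 : p.1 + p.2 / 2 = q.1 + q.2 / 2 := congrArg Prod.fst h
  have ha : p.1 = q.1 := by rw [hb] at h1; linarith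
  exact Prod.ext ha hb

lemma tri_inj : Function.Injective (fun p : ℤ × ℤ => tri p.1 p.2) := by
  intro p q h
  have := Lm_inj (by simpa [tri_eq_Lm] using h)
  have h1 : (p.1 : ℝ) = q.1 := congrArg Prod.fst this
  have h2 : (p.2 : ℝ) = q.2 := congrArg Prod.snd this
  exact Prod.ext (by exact_mod_cast h1) (by exact_mod_cast h2)

/-- Vertex set of the hexagon in lattice coordinates. -/
def V0 : Set (ℝ × ℝ) :=
  {((2:ℝ), (0:ℝ)), ((2:ℝ), (3:ℝ)), ((0:ℝ), (5:ℝ)), ((-3:ℝ), (5:ℝ)), ((-3:ℝ), (3:ℝ)),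
    ((0:ℝ), (0:ℝ))}

lemma hexE2_eq : hexE 2 = Lm '' convexHull ℝ V0 := by
  rw [Lm.image_convexHull]
  have : Lm '' V0 = {tri 2 0, tri 2 3, tri 0 5, tri (-3) 5, tri (-3) 3, tri 0 0} := by
    simp only [V0, Set.image_insert_eq, Set.image_singleton]
    norm_num [tri_eq_Lm]
  rw [this, hexE]
  norm_num

/-- Halfplane description of the hexagon in lattice coordinates. -/
def H0 : Set (ℝ × ℝ) :=
  {p | -3 ≤ p.1 ∧ p.1 ≤ 2 ∧ 0 ≤ p.2 ∧ p.2 ≤ 5 ∧ 0 ≤ p.1 + p.2 ∧ p.1 + p.2 ≤ 5}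

lemma H0_convex : Convex ℝ H0 := by
  rintro p ⟨hp1, hp2, hp3, hp4, hp5, hp6⟩ q ⟨hq1, hq2, hq3, hq4, hq5, hq6⟩ a b ha hb hab
  simp only [H0, Set.mem_setOf_eq, Prod.fst_add, Prod.snd_add, Prod.smul_fst, Prod.smul_snd,
    smul_eq_mul]
  refine ⟨?_, ?_, ?_, ?_, ?_, ?_⟩ <;>
    nlinarith [mul_le_mul_of_nonneg_left hp1 ha, mul_le_mul_of_nonneg_left hp2 ha,
      mul_le_mul_of_nonneg_left hp3 ha, mul_le_mul_of_nonneg_left hp4 ha,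
      mul_le_mul_of_nonneg_left hp5 ha, mul_le_mul_of_nonneg_left hp6 ha,
      mul_le_mul_of_nonneg_left hq1 hb, mul_le_mul_of_nonneg_left hq2 hb,
      mul_le_mul_of_nonneg_left hq3 hb, mul_le_mul_of_nonneg_left hq4 hb,
      mul_le_mul_of_nonneg_left hq5 hb, mul_le_mul_of_nonneg_left hq6 hb]

lemma hull_subset_H0 : convexHull ℝ V0 ⊆ H0 := by
  refine convexHull_min ?_ H0_convex
  intro p hp
  simp only [V0, Set.mem_insert_iff, Set.mem_singleton_iff] at hp
  rcases hp with rfl | rfl | rfl | rfl | rfl | rfl <;> norm_num [H0]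

lemma hull3 {s : Set (ℝ × ℝ)} {v1 v2 v3 p : ℝ × ℝ} (h1 : v1 ∈ s) (h2 : v2 ∈ s) (h3 : v3 ∈ s)
    {c1 c2 c3 : ℝ} (hc1 : 0 ≤ c1) (hc2 : 0 ≤ c2) (hc3 : 0 ≤ c3) (hsum : c1 + c2 + c3 = 1)
    (hp : p = c1 • v1 + c2 • v2 + c3 • v3) : p ∈ convexHull ℝ s := by
  have hconv := convex_convexHull ℝ s
  have h1' := subset_convexHull ℝ s h1
  have h2' := subset_convexHull ℝ s h2
  have h3' := subset_convexHull ℝ s h3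
  rcases eq_or_lt_of_le (by positivity : (0:ℝ) ≤ c1 + c2) with h | h
  · have e1 : c1 = 0 := by linarith
    have e2 : c2 = 0 := by linarith
    have e3 : c3 = 1 := by linarith
    rw [hp, e1, e2, e3]
    simpa using h3'
  · set q := (c1 / (c1 + c2)) • v1 + (c2 / (c1 + c2)) • v2 with hq
    have hqmem : q ∈ convexHull ℝ s :=
      hconv h1' h2' (by positivity) (by positivity) (by field_simp)
    have hpq : p = (c1 + c2) • q + c3 • v3 := by
      rw [hp, hq, smul_add, smul_smul, smul_smul,
        mul_div_cancel₀ _ (ne_of_gt h), mul_div_cancel₀ _ (ne_of_gt h)]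
    rw [hpq]
    exact hconv hqmem h3' (le_of_lt h) hc3 (by linarith)

lemma memH (a b : ℤ) (h1 : -3 ≤ a) (h2 : a ≤ 2) (h3 : 0 ≤ b) (h4 : b ≤ 5)
    (h5 : 0 ≤ a + b) (h6 : a + b ≤ 5) : ((a : ℝ), (b : ℝ)) ∈ convexHull ℝ V0 := by
  have hv0 : ((2:ℝ), (0:ℝ)) ∈ V0 := by simp [V0]
  have hv1 : ((2:ℝ), (3:ℝ)) ∈ V0 := by simp [V0]
  have hv2 : ((0:ℝ), (5:ℝ)) ∈ V0 := by simp [V0]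
  have hv3 : ((-3:ℝ), (5:ℝ)) ∈ V0 := by simp [V0]
  have hv4 : ((-3:ℝ), (3:ℝ)) ∈ V0 := by simp [V0]
  have hv5 : ((0:ℝ), (0:ℝ)) ∈ V0 := by simp [V0]
  interval_cases a <;> interval_cases b
  · exfalso; omega
  · exfalso; omega
  · exfalso; omega
  · exact hull3 hv5 hv3 hv4 (c1 := (0 : ℝ)) (c2 := (0 : ℝ)) (c3 := (1 : ℝ)) (by norm_num) (by norm_num) (by norm_num) (by norm_num) (by norm_num [Prod.ext_iff])
  · exact hull3 hv5 hv3 hv4 (c1 := (0 : ℝ)) (c2 := (1/2 : ℝ)) (c3 := (1/2 : ℝ)) (by norm_num) (by norm_num) (by norm_num) (by norm_num) (by norm_num [Prod.ext_iff])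
  · exact hull3 hv5 hv2 hv3 (c1 := (0 : ℝ)) (c2 := (0 : ℝ)) (c3 := (1 : ℝ)) (by norm_num) (by norm_num) (by norm_num) (by norm_num) (by norm_num [Prod.ext_iff])
  · exfalso; omega
  · exfalso; omega
  · exact hull3 hv5 hv3 hv4 (c1 := (1/3 : ℝ)) (c2 := (0 : ℝ)) (c3 := (2/3 : ℝ)) (by norm_num) (by norm_num) (by norm_num) (by norm_num) (by norm_num [Prod.ext_iff])
  · exact hull3 hv5 hv3 hv4 (c1 := (1/3 : ℝ)) (c2 := (1/2 : ℝ)) (c3 := (1/6 : ℝ)) (by norm_num) (by norm_num) (by norm_num) (by norm_num) (by norm_num [Prod.ext_iff])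
  · exact hull3 hv5 hv2 hv3 (c1 := (1/5 : ℝ)) (c2 := (2/15 : ℝ)) (c3 := (2/3 : ℝ)) (by norm_num) (by norm_num) (by norm_num) (by norm_num) (by norm_num [Prod.ext_iff])
  · exact hull3 hv5 hv2 hv3 (c1 := (0 : ℝ)) (c2 := (1/3 : ℝ)) (c3 := (2/3 : ℝ)) (by norm_num) (by norm_num) (by norm_num) (by norm_num) (by norm_num [Prod.ext_iff])
  · exfalso; omega
  · exact hull3 hv5 hv3 hv4 (c1 := (2/3 : ℝ)) (c2 := (0 : ℝ)) (c3 := (1/3 : ℝ)) (by norm_num) (by norm_num) (by norm_num) (by norm_num) (by norm_num [Prod.ext_iff])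
  · exact hull3 hv5 hv2 hv3 (c1 := (3/5 : ℝ)) (c2 := (1/15 : ℝ)) (c3 := (1/3 : ℝ)) (by norm_num) (by norm_num) (by norm_num) (by norm_num) (by norm_num [Prod.ext_iff])
  · exact hull3 hv5 hv2 hv3 (c1 := (2/5 : ℝ)) (c2 := (4/15 : ℝ)) (c3 := (1/3 : ℝ)) (by norm_num) (by norm_num) (by norm_num) (by norm_num) (by norm_num [Prod.ext_iff])
  · exact hull3 hv5 hv2 hv3 (c1 := (1/5 : ℝ)) (c2 := (7/15 : ℝ)) (c3 := (1/3 : ℝ)) (by norm_num) (by norm_num) (by norm_num) (by norm_num) (by norm_num [Prod.ext_iff])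
  · exact hull3 hv5 hv2 hv3 (c1 := (0 : ℝ)) (c2 := (2/3 : ℝ)) (c3 := (1/3 : ℝ)) (by norm_num) (by norm_num) (by norm_num) (by norm_num) (by norm_num [Prod.ext_iff])
  · exact hull3 hv5 hv0 hv1 (c1 := (1 : ℝ)) (c2 := (0 : ℝ)) (c3 := (0 : ℝ)) (by norm_num) (by norm_num) (by norm_num) (by norm_num) (by norm_num [Prod.ext_iff])
  · exact hull3 hv5 hv1 hv2 (c1 := (4/5 : ℝ)) (c2 := (0 : ℝ)) (c3 := (1/5 : ℝ)) (by norm_num) (by norm_num) (by norm_num) (by norm_num) (by norm_num [Prod.ext_iff])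
  · exact hull3 hv5 hv1 hv2 (c1 := (3/5 : ℝ)) (c2 := (0 : ℝ)) (c3 := (2/5 : ℝ)) (by norm_num) (by norm_num) (by norm_num) (by norm_num) (by norm_num [Prod.ext_iff])
  · exact hull3 hv5 hv1 hv2 (c1 := (2/5 : ℝ)) (c2 := (0 : ℝ)) (c3 := (3/5 : ℝ)) (by norm_num) (by norm_num) (by norm_num) (by norm_num) (by norm_num [Prod.ext_iff])
  · exact hull3 hv5 hv1 hv2 (c1 := (1/5 : ℝ)) (c2 := (0 : ℝ)) (c3 := (4/5 : ℝ)) (by norm_num) (by norm_num) (by norm_num) (by norm_num) (by norm_num [Prod.ext_iff])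
  · exact hull3 hv5 hv1 hv2 (c1 := (0 : ℝ)) (c2 := (0 : ℝ)) (c3 := (1 : ℝ)) (by norm_num) (by norm_num) (by norm_num) (by norm_num) (by norm_num [Prod.ext_iff])
  · exact hull3 hv5 hv0 hv1 (c1 := (1/2 : ℝ)) (c2 := (1/2 : ℝ)) (c3 := (0 : ℝ)) (by norm_num) (by norm_num) (by norm_num) (by norm_num) (by norm_num [Prod.ext_iff])
  · exact hull3 hv5 hv0 hv1 (c1 := (1/2 : ℝ)) (c2 := (1/6 : ℝ)) (c3 := (1/3 : ℝ)) (by norm_num) (by norm_num) (by norm_num) (by norm_num) (by norm_num [Prod.ext_iff])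
  · exact hull3 hv5 hv1 hv2 (c1 := (2/5 : ℝ)) (c2 := (1/2 : ℝ)) (c3 := (1/10 : ℝ)) (by norm_num) (by norm_num) (by norm_num) (by norm_num) (by norm_num [Prod.ext_iff])
  · exact hull3 hv5 hv1 hv2 (c1 := (1/5 : ℝ)) (c2 := (1/2 : ℝ)) (c3 := (3/10 : ℝ)) (by norm_num) (by norm_num) (by norm_num) (by norm_num) (by norm_num [Prod.ext_iff])
  · exact hull3 hv5 hv1 hv2 (c1 := (0 : ℝ)) (c2 := (1/2 : ℝ)) (c3 := (1/2 : ℝ)) (by norm_num) (by norm_num) (by norm_num) (by norm_num) (by norm_num [Prod.ext_iff])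
  · exfalso; omega
  · exact hull3 hv5 hv0 hv1 (c1 := (0 : ℝ)) (c2 := (1 : ℝ)) (c3 := (0 : ℝ)) (by norm_num) (by norm_num) (by norm_num) (by norm_num) (by norm_num [Prod.ext_iff])
  · exact hull3 hv5 hv0 hv1 (c1 := (0 : ℝ)) (c2 := (2/3 : ℝ)) (c3 := (1/3 : ℝ)) (by norm_num) (by norm_num) (by norm_num) (by norm_num) (by norm_num [Prod.ext_iff])
  · exact hull3 hv5 hv0 hv1 (c1 := (0 : ℝ)) (c2 := (1/3 : ℝ)) (c3 := (2/3 : ℝ)) (by norm_num) (by norm_num) (by norm_num) (by norm_num) (by norm_num [Prod.ext_iff])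
  · exact hull3 hv5 hv0 hv1 (c1 := (0 : ℝ)) (c2 := (0 : ℝ)) (c3 := (1 : ℝ)) (by norm_num) (by norm_num) (by norm_num) (by norm_num) (by norm_num [Prod.ext_iff])
  · exfalso; omega
  · exfalso; omega

/-- The 27 lattice coordinate pairs. -/
noncomputable def S : Finset (ℤ × ℤ) :=
  (Finset.Icc (-3 : ℤ) 2 ×ˢ Finset.Icc (0 : ℤ) 5).filter fun p => 0 ≤ p.1 + p.2 ∧ p.1 + p.2 ≤ 5

lemma mem_S {a b : ℤ} : (a, b) ∈ S ↔
    -3 ≤ a ∧ a ≤ 2 ∧ 0 ≤ b ∧ b ≤ 5 ∧ 0 ≤ a + b ∧ a + b ≤ 5 := by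
  simp [S, Finset.mem_filter, Finset.mem_Icc, and_assoc]

/-- The 27 points as a finset. -/
noncomputable def P : Finset (ℝ × ℝ) := S.image fun p => tri p.1 p.2

lemma key : triLattice ∩ hexE 2 = ↑P := by
  ext x
  simp only [Set.mem_inter_iff, triLattice, Set.mem_setOf_eq, P, Finset.coe_image,
    Set.mem_image, Finset.mem_coe]
  constructor
  · rintro ⟨⟨a, b, rfl⟩, hx⟩
    refine ⟨(a, b), ?_, rfl⟩
    rw [hexE2_eq] at hx
    obtain ⟨q, hq, hLq⟩ := hx
    have hq' : q = ((a : ℝ), (b : ℝ)) := Lm_inj (hLq.trans (tri_eq_Lm a b))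
    rw [hq'] at hq
    obtain ⟨g1, g2, g3, g4, g5, g6⟩ := hull_subset_H0 hq
    simp only [H0] at *
    rw [mem_S]
    constructor; · exact_mod_cast g1
    constructor; · exact_mod_cast g2
    constructor; · exact_mod_cast g3
    constructor; · exact_mod_cast g4
    constructor; · exact_mod_cast g5
    · exact_mod_cast g6
  · rintro ⟨⟨a, b⟩, hab, rfl⟩
    rw [mem_S] at hab
    obtain ⟨g1, g2, g3, g4, g5, g6⟩ := hab
    refine ⟨⟨a, b, rfl⟩, ?_⟩
    rw [hexE2_eq]
    exact ⟨((a : ℝ), (b : ℝ)), memH a b g1 g2 g3 g4 g5 g6, (tri_eq_Lm a b).symm⟩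

lemma sqd_tri (a b a' b' : ℤ) :
    sqd (tri a b) (tri a' b') =
      (((a - a') ^ 2 + (a - a') * (b - b') + (b - b') ^ 2 : ℤ) : ℝ) := by
  have h3 : Real.sqrt 3 ^ 2 = 3 := Real.sq_sqrt (by norm_num)
  simp only [sqd, tri]
  push_cast
  nlinarith [h3]

lemma valmem : ∀ p ∈ S, ∀ q ∈ S, p ≠ q →
    ((p.1 - q.1) ^ 2 + (p.1 - q.1) * (p.2 - q.2) + (p.2 - q.2) ^ 2 : ℤ) ∈
      ({1, 3, 4, 7, 9, 12, 13, 16, 19, 21, 25} : Finset ℤ) := by decide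

lemma S_card : S.card = 27 := by decide

theorem equiangular_2_3_hexagon_eleven_distance :
    (triLattice ∩ hexE 2).ncard = 27 ∧
      sqdSet (triLattice ∩ hexE 2) = {1, 3, 4, 7, 9, 12, 13, 16, 19, 21, 25} := by
  rw [key]
  constructor
  · rw [Set.ncard_coe_finset, P, Finset.card_image_of_injective _ tri_inj, S_card]
  · ext d
    simp only [sqdSet, Set.mem_setOf_eq, Finset.mem_coe, P, Finset.mem_image]
    constructor
    · rintro ⟨p, hp, q, hq, hne, rfl⟩
      obtain ⟨⟨a, b⟩, hab, rfl⟩ := hp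
      obtain ⟨⟨a', b'⟩, hab', rfl⟩ := hq
      have hpq : ((a, b) : ℤ × ℤ) ≠ (a', b') := fun h => hne (by rw [h])
      have hv := valmem (a, b) hab (a', b') hab' hpq
      rw [sqd_tri]
      simp only [Finset.mem_insert, Finset.mem_singleton] at hv
      simp only [Set.mem_insert_iff, Set.mem_singleton_iff]
      rcases hv with h | h | h | h | h | h | h | h | h | h | h <;> rw [h] <;> norm_num
    · intro hd
      simp only [Set.mem_insert_iff, Set.mem_singleton_iff] at hd
      have witness : ∀ a b : ℤ, (a, b) ∈ S → (a, b) ≠ (0, 0) →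
          ∃ p, (∃ x ∈ S, tri x.1 x.2 = p) ∧ ∃ q, (∃ x ∈ S, tri x.1 x.2 = q) ∧ p ≠ q ∧
            ((a ^ 2 + a * b + b ^ 2 : ℤ) : ℝ) = sqd p q := by
        intro a b hS hne
        refine ⟨tri a b, ⟨(a, b), hS, rfl⟩, tri 0 0, ⟨(0, 0), by decide, rfl⟩, ?_, ?_⟩
        · exact fun h => hne (tri_inj h)
        · rw [sqd_tri]; push_cast; ring_nf
      rcases hd with rfl | rfl | rfl | rfl | rfl | rfl | rfl | rfl | rfl | rfl | rfl
      · simpa using witness 1 0 (by decide) (by decide)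
      · simpa using witness 1 1 (by decide) (by decide)
      · simpa using witness 2 0 (by decide) (by decide)
      · simpa using witness 1 2 (by decide) (by decide)
      · simpa using witness 0 3 (by decide) (by decide)
      · simpa using witness 2 2 (by decide) (by decide)
      · simpa using witness 1 3 (by decide) (by decide)
      · simpa using witness 0 4 (by decide) (by decide)
      · simpa using witness 2 3 (by decide) (by decide)
      · simpa using witness 1 4 (by decide) (by decide)
      · simpa using witness 0 5 (by decide) (by decide)
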